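/- Let (G_n)_{n∈ℕ} be a sequence of finite groups, each generated by a finite subset S_n with #S_n ≤ L for a fixed L ∈ ℕ, and equip each G_n with its word metric d_n. Let X = ⊔_{n∈ℕ} G_n be a coarse disjoint union, i.e. X carries a metric d that restricts to d_n on each G_n and satisfies d(G_n, G_m) ≥ n + m + diam(G_n) + diam(G_m) for all n ≠ m. Then the following are equivalent: (1) the sequence {(G_n, S_n)}_{n∈ℕ} is uniformly amenable: for every ε > 0 there exist D ∈ ℕ and functions f_n : G_n → [0,∞) with Σ_{γ∈G_n} f_n(γ)² = 1, Σ_{γ∈G_n} (f_n(γ) − f_n(γs))² ≤ ε² for every s ∈ S_n, and supp(f_n) ⊆ B(1_{G_n}, D); (2) X has Property A: for every ε > 0 and R > 0 there exist S > 0 and a map ξ assigning to each x ∈ X a function ξ_x : X → [0,∞) with Σ_{z∈X} ξ_x(z)² = 1, such that Σ_{z∈X} (ξ_x(z) − ξ_y(z))² ≤ ε² whenever d(x,y) ≤ R, and supp(ξ_x) ⊆ {z ∈ X : d(x,z) ≤ S} for every x ∈ X. -/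

import Mathlib

/-- The word-metric ball `B(1_G, D)` with respect to a generating set `S`:
the set of elements of `G` expressible as a product of at most `D` elements
of `S ∪ S⁻¹`. -/
def wordBall {G : Type*} [Group G] (S : Set G) (D : ℕ) : Set G :=
  {g | ∃ l : List G, l.length ≤ D ∧ (∀ x ∈ l, x ∈ S ∨ x⁻¹ ∈ S) ∧ l.prod = g}

/-- The word metric associated to a generating set `S`: the distance from `x`
to `y` is the least `D` with `x⁻¹ * y ∈ B(1, D)`. -/
noncomputable def wordDist {G : Type*} [Group G] (S : Set G) (x y : G) : ℕ :=
  sInf {D : ℕ | x⁻¹ * y ∈ wordBall S D}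

/-- The diameter of a finite group in the word metric associated to `S`. -/
noncomputable def wordDiam (G : Type*) [Group G] [Fintype G] (S : Set G) : ℕ :=
  Finset.univ.sup fun p : G × G => wordDist S p.1 p.2

section WB
variable {H : Type*} [Group H] {S : Set H}

lemma wordBall_mono {D D' : ℕ} (h : D ≤ D') : wordBall S D ⊆ wordBall S D' :=
  fun _ ⟨l, hl, hx, hp⟩ => ⟨l, hl.trans h, hx, hp⟩

lemma inv_mem_wordBall {g : H} {D : ℕ} (h : g ∈ wordBall S D) : g⁻¹ ∈ wordBall S D := by
  obtain ⟨l, hl, hx, hp⟩ := h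
  refine ⟨(l.map fun x => x⁻¹).reverse, by simpa using hl, ?_, ?_⟩
  · intro x hx'
    simp only [List.mem_reverse, List.mem_map] at hx'
    obtain ⟨y, hy, rfl⟩ := hx'
    rcases hx y hy with h | h
    · right; simpa using h
    · left; exact h
  · rw [← List.prod_inv_reverse, hp]

lemma exists_word (hgen : Subgroup.closure S = ⊤) (g : H) :
    ∃ l : List H, (∀ x ∈ l, x ∈ S ∨ x⁻¹ ∈ S) ∧ l.prod = g := by
  have hg : g ∈ Submonoid.closure (S ∪ S⁻¹) := by
    rw [← Subgroup.closure_toSubmonoid, Subgroup.mem_toSubmonoid, hgen]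
    exact Subgroup.mem_top g
  obtain ⟨l, hl, hp⟩ := Submonoid.exists_list_of_mem_closure hg
  refine ⟨l, fun x hx => ?_, hp⟩
  rcases hl x hx with h | h
  · exact Or.inl h
  · exact Or.inr (Set.mem_inv.mp h)

lemma mem_wordBall_wordDist (hgen : Subgroup.closure S = ⊤) (x y : H) :
    x⁻¹ * y ∈ wordBall S (wordDist S x y) := by
  obtain ⟨l, hl, hp⟩ := exists_word hgen (x⁻¹ * y)
  have hne : {D : ℕ | x⁻¹ * y ∈ wordBall S D}.Nonempty := ⟨l.length, l, le_rfl, hl, hp⟩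
  exact Nat.sInf_mem hne

end WB

def fiberExt {G : ℕ → Type*} (n : ℕ) (g : G n → ℝ) : (Σ m, G m) → ℝ :=
  fun z => if h : z.1 = n then g (h ▸ z.2) else 0

@[simp] lemma fiberExt_same {G : ℕ → Type*} (n : ℕ) (g : G n → ℝ) (b : G n) :
    fiberExt n g ⟨n, b⟩ = g b := by simp [fiberExt]

@[simp] lemma fiberExt_ne {G : ℕ → Type*} (n : ℕ) (g : G n → ℝ) {m : ℕ} (b : G m)
    (h : m ≠ n) : fiberExt n g ⟨m, b⟩ = 0 := dif_neg h

lemma tsum_fiber {G : ℕ → Type*} [∀ n, Fintype (G n)] (g : (Σ n, G n) → ℝ) (n : ℕ)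
    (h : ∀ z : Σ m, G m, z.1 ≠ n → g z = 0) : ∑' z, g z = ∑ b, g ⟨n, b⟩ := by
  have hsupp : Function.support g ⊆ Set.range (Sigma.mk n) := by
    intro z hz
    obtain ⟨m, b⟩ := z
    rcases eq_or_ne m n with rfl | hne
    · exact ⟨b, rfl⟩
    · exact absurd (h _ hne) hz
  rw [← sigma_mk_injective.tsum_eq hsupp, tsum_fintype]

lemma euclid_norm_sq {ι : Type*} [Fintype ι] (v : EuclideanSpace ℝ ι) :
    ‖v‖ ^ 2 = ∑ i, v i ^ 2 := by
  rw [EuclideanSpace.norm_eq, Real.sq_sqrt (Finset.sum_nonneg fun i _ => sq_nonneg _)]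
  simp [Real.norm_eq_abs, sq_abs]

lemma sqrt_sub_sq_le {a b : ℝ} (ha : 0 ≤ a) (hb : 0 ≤ b) :
    (Real.sqrt a - Real.sqrt b) ^ 2 ≤ |a - b| := by
  rcases le_total a b with h | h
  · rw [abs_of_nonpos (by linarith)]
    have hs := Real.sqrt_le_sqrt h
    nlinarith [Real.sq_sqrt ha, Real.sq_sqrt hb, Real.sqrt_nonneg a, Real.sqrt_nonneg b]
  · rw [abs_of_nonneg (by linarith)]
    have hs := Real.sqrt_le_sqrt h
    nlinarith [Real.sq_sqrt ha, Real.sq_sqrt hb, Real.sqrt_nonneg a, Real.sqrt_nonneg b]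


lemma block_norm {Γ : Type*} [Group Γ] [Fintype Γ] (k : Γ → Γ → ℝ)
    (hknorm : ∀ h : Γ, ∑ w : Γ, k h w ^ 2 = 1) :
    ∑ γ : Γ, Real.sqrt ((Fintype.card Γ : ℝ)⁻¹ * ∑ h : Γ, k h (h * γ⁻¹) ^ 2) ^ 2 = 1 := by
  have hc : (0:ℝ) < (Fintype.card Γ : ℝ) := by exact_mod_cast Fintype.card_pos
  have h1 : ∀ γ : Γ, Real.sqrt ((Fintype.card Γ : ℝ)⁻¹ * ∑ h : Γ, k h (h * γ⁻¹) ^ 2) ^ 2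
      = (Fintype.card Γ : ℝ)⁻¹ * ∑ h : Γ, k h (h * γ⁻¹) ^ 2 := fun γ =>
    Real.sq_sqrt (mul_nonneg (inv_nonneg.mpr hc.le) (Finset.sum_nonneg fun _ _ => sq_nonneg _))
  rw [Finset.sum_congr rfl fun γ _ => h1 γ]
  calc ∑ γ : Γ, (Fintype.card Γ : ℝ)⁻¹ * ∑ h : Γ, k h (h * γ⁻¹) ^ 2
      = ∑ δ : Γ, (Fintype.card Γ : ℝ)⁻¹ * ∑ h : Γ, k h (h * δ) ^ 2 :=
        Fintype.sum_equiv (Equiv.inv Γ) _ _ (fun γ => rfl)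
  _ = (Fintype.card Γ : ℝ)⁻¹ * ∑ δ : Γ, ∑ h : Γ, k h (h * δ) ^ 2 := by
        rw [Finset.mul_sum]
  _ = (Fintype.card Γ : ℝ)⁻¹ * ∑ h : Γ, ∑ δ : Γ, k h (h * δ) ^ 2 := by
        rw [Finset.sum_comm]
  _ = (Fintype.card Γ : ℝ)⁻¹ * ∑ h : Γ, (1:ℝ) := by
        congr 1
        refine Finset.sum_congr rfl fun h _ => ?_
        calc ∑ δ : Γ, k h (h * δ) ^ 2 = ∑ w : Γ, k h w ^ 2 :=
              Fintype.sum_equiv (Equiv.mulLeft h) _ _ (fun δ => rfl)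
        _ = 1 := hknorm h
  _ = 1 := by
        rw [Finset.sum_const, Finset.card_univ, nsmul_eq_mul, mul_one,
          inv_mul_cancel₀ hc.ne']

lemma block_var {Γ : Type*} [Group Γ] [Fintype Γ] (k : Γ → Γ → ℝ) (εA : ℝ) (hεA : 0 ≤ εA)
    (s : Γ) (hknorm : ∀ h : Γ, ∑ w : Γ, k h w ^ 2 = 1)
    (hkvar : ∀ h : Γ, ∑ w : Γ, (k h w - k (h * s) w) ^ 2 ≤ εA ^ 2) :
    ∑ γ : Γ, (Real.sqrt ((Fintype.card Γ : ℝ)⁻¹ * ∑ h : Γ, k h (h * γ⁻¹) ^ 2)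
      - Real.sqrt ((Fintype.card Γ : ℝ)⁻¹ * ∑ h : Γ, k h (h * (γ * s)⁻¹) ^ 2)) ^ 2
      ≤ 2 * εA := by
  have hc : (0:ℝ) < (Fintype.card Γ : ℝ) := by exact_mod_cast Fintype.card_pos
  have hnn : ∀ δ : Γ, 0 ≤ (Fintype.card Γ : ℝ)⁻¹ * ∑ h : Γ, k h (h * δ) ^ 2 := fun δ =>
    mul_nonneg (inv_nonneg.mpr hc.le) (Finset.sum_nonneg fun _ _ => sq_nonneg _)
  have key : ∀ h : Γ, ∑ w : Γ, |k h w ^ 2 - k (h * s) w ^ 2| ≤ 2 * εA := by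
    intro h
    have hA := hkvar h
    have hB : ∑ w : Γ, (k h w + k (h * s) w) ^ 2 ≤ 4 := by
      calc ∑ w : Γ, (k h w + k (h * s) w) ^ 2
          ≤ ∑ w : Γ, (2 * k h w ^ 2 + 2 * k (h * s) w ^ 2) :=
            Finset.sum_le_sum fun w _ => by nlinarith [sq_nonneg (k h w - k (h * s) w)]
      _ = 4 := by
            rw [Finset.sum_add_distrib, ← Finset.mul_sum, ← Finset.mul_sum,
              hknorm h, hknorm (h * s)]
            norm_num
    have hCS : (∑ w : Γ, |k h w ^ 2 - k (h * s) w ^ 2|) ^ 2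
        ≤ (∑ w : Γ, (k h w - k (h * s) w) ^ 2) * (∑ w : Γ, (k h w + k (h * s) w) ^ 2) := by
      calc (∑ w : Γ, |k h w ^ 2 - k (h * s) w ^ 2|) ^ 2
          = (∑ w : Γ, |k h w - k (h * s) w| * |k h w + k (h * s) w|) ^ 2 := by
            congr 1
            refine Finset.sum_congr rfl fun w _ => ?_
            rw [← abs_mul]
            congr 1
            ring
      _ ≤ (∑ w : Γ, |k h w - k (h * s) w| ^ 2) * (∑ w : Γ, |k h w + k (h * s) w| ^ 2) :=
            Finset.sum_mul_sq_le_sq_mul_sq _ _ _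
      _ = _ := by simp [sq_abs]
    have hXnn : (0:ℝ) ≤ ∑ w : Γ, |k h w ^ 2 - k (h * s) w ^ 2| :=
      Finset.sum_nonneg fun w _ => abs_nonneg _
    have hBnn : (0:ℝ) ≤ ∑ w : Γ, (k h w + k (h * s) w) ^ 2 :=
      Finset.sum_nonneg fun w _ => sq_nonneg _
    have hsq : (∑ w : Γ, |k h w ^ 2 - k (h * s) w ^ 2|) ^ 2 ≤ 4 * εA ^ 2 := by
      calc (∑ w : Γ, |k h w ^ 2 - k (h * s) w ^ 2|) ^ 2
          ≤ (∑ w : Γ, (k h w - k (h * s) w) ^ 2) * (∑ w : Γ, (k h w + k (h * s) w) ^ 2) := hCS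
      _ ≤ εA ^ 2 * 4 := mul_le_mul hA hB hBnn (by positivity)
      _ = 4 * εA ^ 2 := by ring
    nlinarith [hsq, hXnn, hεA]
  calc ∑ γ : Γ, (Real.sqrt ((Fintype.card Γ : ℝ)⁻¹ * ∑ h : Γ, k h (h * γ⁻¹) ^ 2)
        - Real.sqrt ((Fintype.card Γ : ℝ)⁻¹ * ∑ h : Γ, k h (h * (γ * s)⁻¹) ^ 2)) ^ 2
      ≤ ∑ γ : Γ, |((Fintype.card Γ : ℝ)⁻¹ * ∑ h : Γ, k h (h * γ⁻¹) ^ 2)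
        - ((Fintype.card Γ : ℝ)⁻¹ * ∑ h : Γ, k h (h * (γ * s)⁻¹) ^ 2)| :=
        Finset.sum_le_sum fun γ _ => sqrt_sub_sq_le (hnn γ⁻¹) (hnn (γ * s)⁻¹)
  _ = ∑ δ : Γ, |((Fintype.card Γ : ℝ)⁻¹ * ∑ h : Γ, k h (h * δ) ^ 2)
        - ((Fintype.card Γ : ℝ)⁻¹ * ∑ h : Γ, k h (h * (s⁻¹ * δ)) ^ 2)| := by
        refine Fintype.sum_equiv (Equiv.inv Γ) _ _ fun γ => ?_
        rw [mul_inv_rev]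
        rfl
  _ ≤ ∑ δ : Γ, (Fintype.card Γ : ℝ)⁻¹ * ∑ h : Γ, |k h (h * δ) ^ 2 - k (h * s) (h * δ) ^ 2| := by
        refine Finset.sum_le_sum fun δ _ => ?_
        have hsubst : ∑ h : Γ, k h (h * (s⁻¹ * δ)) ^ 2 = ∑ h : Γ, k (h * s) (h * δ) ^ 2 := by
          refine Fintype.sum_equiv (Equiv.mulRight s⁻¹) _ _ fun h => ?_
          simp only [Equiv.coe_mulRight]
          rw [inv_mul_cancel_right, mul_assoc]
        rw [hsubst, ← mul_sub, abs_mul, abs_of_nonneg (inv_nonneg.mpr hc.le),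
          ← Finset.sum_sub_distrib]
        exact mul_le_mul_of_nonneg_left (Finset.abs_sum_le_sum_abs _ _)
          (inv_nonneg.mpr hc.le)
  _ = (Fintype.card Γ : ℝ)⁻¹
        * ∑ h : Γ, ∑ δ : Γ, |k h (h * δ) ^ 2 - k (h * s) (h * δ) ^ 2| := by
        rw [← Finset.mul_sum, Finset.sum_comm]
  _ = (Fintype.card Γ : ℝ)⁻¹
        * ∑ h : Γ, ∑ w : Γ, |k h w ^ 2 - k (h * s) w ^ 2| := by
        congr 1
        exact Finset.sum_congr rfl fun h _ =>
          Fintype.sum_equiv (Equiv.mulLeft h) _ _ (fun δ => rfl)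
  _ ≤ (Fintype.card Γ : ℝ)⁻¹ * ∑ _h : Γ, (2 * εA) := by
        refine mul_le_mul_of_nonneg_left ?_ (inv_nonneg.mpr hc.le)
        exact Finset.sum_le_sum fun h _ => key h
  _ = 2 * εA := by
        rw [Finset.sum_const, Finset.card_univ, nsmul_eq_mul, ← mul_assoc,
          inv_mul_cancel₀ hc.ne', one_mul]


theorem stmt_14 (G : ℕ → Type*) [∀ n, Group (G n)] [∀ n, Fintype (G n)]
    (S : ∀ n, Finset (G n))
    (hgen : ∀ n, Subgroup.closure ((S n : Set (G n))) = ⊤)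
    (L : ℕ) (hL : ∀ n, (S n).card ≤ L)
    (d : (Σ n, G n) → (Σ n, G n) → ℝ)
    (hd_eq : ∀ x y, d x y = 0 ↔ x = y)
    (hd_symm : ∀ x y, d x y = d y x)
    (hd_tri : ∀ x y z, d x z ≤ d x y + d y z)
    (hd_restrict : ∀ n (x y : G n),
      d ⟨n, x⟩ ⟨n, y⟩ = wordDist ((S n : Set (G n))) x y)
    (hd_sep : ∀ n m, n ≠ m → ∀ (x : G n) (y : G m),
      ((n : ℝ) + m + wordDiam (G n) ((S n : Set (G n)))
          + wordDiam (G m) ((S m : Set (G m)))) ≤ d ⟨n, x⟩ ⟨m, y⟩) :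
    (∀ ε : ℝ, 0 < ε → ∃ D : ℕ, ∃ f : ∀ n, G n → ℝ, ∀ n,
      (∀ γ, 0 ≤ f n γ) ∧ (∑' γ, f n γ ^ 2 = 1) ∧
      (∀ s ∈ S n, ∑' γ, (f n γ - f n (γ * s)) ^ 2 ≤ ε ^ 2) ∧
      Function.support (f n) ⊆ wordBall ((S n : Set (G n))) D)
    ↔
    (∀ ε : ℝ, 0 < ε → ∀ R : ℝ, 0 < R → ∃ Sb : ℝ, 0 < Sb ∧
      ∃ ξ : (Σ n, G n) → (Σ n, G n) → ℝ,
        (∀ x z, 0 ≤ ξ x z) ∧ (∀ x, ∑' z, ξ x z ^ 2 = 1) ∧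
        (∀ x y, d x y ≤ R → ∑' z, (ξ x z - ξ y z) ^ 2 ≤ ε ^ 2) ∧
        (∀ x z, ξ x z ≠ 0 → d x z ≤ Sb)) := by
  classical
  have hd_nonneg : ∀ x y, 0 ≤ d x y := by
    intro x y
    have h1 := hd_tri x y x
    have h2 := (hd_eq x x).mpr rfl
    have h3 := hd_symm x y
    linarith
  constructor
  · -- uniform amenability → property A
    intro h1 ε hε R hR
    set N : ℕ := ⌈R⌉₊ with hN
    have hRN : R ≤ (N : ℝ) := Nat.le_ceil R
    have hε' : (0:ℝ) < ε / (N + 1) := by positivity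
    obtain ⟨D, f, hf⟩ := h1 (ε / (N + 1)) hε'
    set x₀ : (Σ n, G n) := ⟨0, 1⟩ with hx₀
    set T : Finset (Σ n, G n) := (Finset.range (N+1)).sigma (fun _ => Finset.univ) with hT
    have hdTex : ∃ C : ℝ, 0 ≤ C ∧ ∀ x ∈ T, ∀ z ∈ T, d x z ≤ C := by
      refine ⟨(((T ×ˢ T).sup fun p : (Σ k, G k) × (Σ k, G k) => ⌈d p.1 p.2⌉₊ : ℕ) : ℝ),
        Nat.cast_nonneg _, ?_⟩
      intro x hx z hz
      have hmem : (x, z) ∈ T ×ˢ T := Finset.mem_product.mpr ⟨hx, hz⟩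
      have h2 := Finset.le_sup (f := fun p : (Σ k, G k) × (Σ k, G k) => ⌈d p.1 p.2⌉₊) hmem
      calc d x z ≤ (⌈d x z⌉₊ : ℝ) := Nat.le_ceil _
      _ ≤ _ := by exact_mod_cast h2
    obtain ⟨Dlow, hDlow0, hdT⟩ := hdTex
    set ξ : (Σ n, G n) → (Σ n, G n) → ℝ := fun x z =>
      if x.1 ≤ N then (if z = x₀ then 1 else 0)
      else fiberExt x.1 (fun c => f x.1 (c⁻¹ * x.2)) z with hξ
    have hmemT : ∀ (n : ℕ), n ≤ N → ∀ a : G n, (⟨n, a⟩ : Σ m, G m) ∈ T := by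
      intro n hn a
      rw [hT]
      exact Finset.mem_sigma.mpr ⟨Finset.mem_range.mpr (Nat.lt_succ_of_le hn), Finset.mem_univ _⟩
    refine ⟨max Dlow (D : ℝ) + 1,
      by nlinarith [le_max_left Dlow (D:ℝ)], ξ, ?_, ?_, ?_, ?_⟩
    · intro x z
      simp only [hξ]
      split_ifs with h1 h2
      · norm_num
      · norm_num
      · obtain ⟨m, b⟩ := z
        rcases eq_or_ne m x.1 with rfl | hne
        · rw [fiberExt_same]; exact (hf _).1 _
        · rw [fiberExt_ne _ _ _ hne]
      -- (no more goals expected)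
    · intro x
      obtain ⟨n, a⟩ := x
      by_cases hn : n ≤ N
      · simp only [hξ, if_pos hn]
        calc ∑' z, (if z = x₀ then (1:ℝ) else 0) ^ 2
            = ∑' z, (if z = x₀ then (1:ℝ) else 0) := by
              refine tsum_congr fun z => ?_
              split_ifs <;> norm_num
        _ = 1 := tsum_ite_eq x₀ 1
      · simp only [hξ, if_neg hn]
        rw [tsum_fiber _ n (by
          intro z hz
          obtain ⟨m, b⟩ := z
          rw [fiberExt_ne _ _ _ hz]
          norm_num)]
        simp only [fiberExt_same]
        have h2 := (hf n).2.1
        rw [tsum_fintype] at h2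
        rw [← h2]
        exact Fintype.sum_equiv ((Equiv.inv (G n)).trans (Equiv.mulRight a)) _ _
          (fun b => rfl)
    · intro x y hdxy
      obtain ⟨n, a⟩ := x
      obtain ⟨m, b⟩ := y
      have hbig : ∀ k k' : ℕ, k ≠ k' → N < k' → ¬ (d ⟨n,a⟩ ⟨m,b⟩ ≤ R) → True := fun _ _ _ _ _ => trivial
      by_cases hn : n ≤ N <;> by_cases hm : m ≤ N
      · -- both low
        simp only [hξ, if_pos hn, if_pos hm]
        simp only [sub_self]
        simpa using sq_nonneg ε
      · exfalso
        push_neg at hm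
        have hne : n ≠ m := by omega
        have hsep := hd_sep n m hne a b
        have hm' : (N:ℝ) + 1 ≤ (m:ℝ) := by exact_mod_cast hm
        have h0 : (0:ℝ) ≤ (n:ℝ) := Nat.cast_nonneg n
        have h1 : (0:ℝ) ≤ (wordDiam (G n) ((S n : Set (G n))) : ℝ) := Nat.cast_nonneg _
        have h2 : (0:ℝ) ≤ (wordDiam (G m) ((S m : Set (G m))) : ℝ) := Nat.cast_nonneg _
        linarith
      · exfalso
        push_neg at hn
        have hne : n ≠ m := by omega
        have hsep := hd_sep n m hne a b
        have hn' : (N:ℝ) + 1 ≤ (n:ℝ) := by exact_mod_cast hn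
        have h0 : (0:ℝ) ≤ (m:ℝ) := Nat.cast_nonneg m
        have h1 : (0:ℝ) ≤ (wordDiam (G n) ((S n : Set (G n))) : ℝ) := Nat.cast_nonneg _
        have h2 : (0:ℝ) ≤ (wordDiam (G m) ((S m : Set (G m))) : ℝ) := Nat.cast_nonneg _
        linarith
      · -- both high
        push_neg at hn hm
        rcases eq_or_ne n m with rfl | hne
        · -- same block: telescoping
          have hword : wordDist ((S n : Set (G n))) a b ≤ N := by
            rw [hd_restrict n a b] at hdxy
            exact_mod_cast hdxy.trans hRN
          have hmem : a⁻¹ * b ∈ wordBall ((S n : Set (G n))) N :=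
            wordBall_mono hword (mem_wordBall_wordDist (hgen n) a b)
          obtain ⟨l, hlen, hlet, hprod⟩ := hmem
          simp only [hξ, if_neg (by omega : ¬ n ≤ N)]
          rw [tsum_fiber _ n (by
            intro z hz
            obtain ⟨k, c⟩ := z
            rw [fiberExt_ne _ _ _ hz, fiberExt_ne _ _ _ hz]
            norm_num)]
          simp only [fiberExt_same]
          -- EuclideanSpace setup
          set w : G n → EuclideanSpace ℝ (G n) := fun g => WithLp.toLp 2 (fun c => f n (c * g)) with hw
          have hsub : ∀ (g g' : G n) (c : G n), (w g - w g') c = f n (c * g) - f n (c * g') :=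
            fun g g' c => rfl
          have key : ∀ (g s : G n), (s ∈ (S n : Set (G n)) ∨ s⁻¹ ∈ (S n : Set (G n))) →
              ‖w g - w (g * s)‖ ≤ ε / (N + 1) := by
            intro g s hs
            have hnsq : ‖w g - w (g * s)‖ ^ 2 = ∑ c, (f n c - f n (c * s)) ^ 2 := by
              rw [euclid_norm_sq]
              calc ∑ c, ((w g - w (g*s)) c) ^ 2
                  = ∑ c, (f n (c * g) - f n (c * g * s)) ^ 2 := by
                    refine Finset.sum_congr rfl fun c _ => ?_
                    rw [hsub]; rw [mul_assoc]
              _ = ∑ c, (f n c - f n (c * s)) ^ 2 :=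
                    Fintype.sum_equiv (Equiv.mulRight g) _ _ (fun c => rfl)
            have hbound : ∑ c, (f n c - f n (c * s)) ^ 2 ≤ (ε / (N + 1)) ^ 2 := by
              rcases hs with hs | hs
              · have := (hf n).2.2.1 s hs
                rwa [tsum_fintype] at this
              · have := (hf n).2.2.1 s⁻¹ hs
                rw [tsum_fintype] at this
                calc ∑ c, (f n c - f n (c * s)) ^ 2
                    = ∑ c, (f n c - f n (c * s⁻¹)) ^ 2 := by
                      refine Fintype.sum_equiv (Equiv.mulRight s) _ _ fun c => ?_
                      have h1 : c * s * s⁻¹ = c := by group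
                      simp only [Equiv.coe_mulRight, h1]
                      ring
                _ ≤ _ := this
            have h2 : ‖w g - w (g * s)‖ ^ 2 ≤ (ε / (N + 1)) ^ 2 := by rw [hnsq]; exact hbound
            nlinarith [norm_nonneg (w g - w (g * s)), hε'.le]
          have tele : ∀ l' : List (G n), (∀ x ∈ l', x ∈ (S n : Set (G n)) ∨ x⁻¹ ∈ (S n : Set (G n))) →
              ∀ g : G n, ‖w g - w (g * l'.prod)‖ ≤ l'.length * (ε / (N + 1)) := by
            intro l'
            induction l' with
            | nil => intro _ g; simp
            | cons s t ih =>
                intro hlet' g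
                have h1 := key g s (hlet' s (List.mem_cons_self (a := s) (l := t)))
                have h2 := ih (fun x hx => hlet' x (List.mem_cons_of_mem s hx)) (g * s)
                have heq : g * (s :: t).prod = (g * s) * t.prod := by
                  rw [List.prod_cons, mul_assoc]
                calc ‖w g - w (g * (s :: t).prod)‖
                    = ‖(w g - w (g * s)) + (w (g * s) - w ((g * s) * t.prod))‖ := by
                      rw [sub_add_sub_cancel, heq]
                _ ≤ ‖w g - w (g * s)‖ + ‖w (g * s) - w ((g * s) * t.prod)‖ := norm_add_le _ _
                _ ≤ ε / (N + 1) + t.length * (ε / (N + 1)) := add_le_add h1 h2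
                _ = (s :: t).length * (ε / (N + 1)) := by
                      simp [List.length_cons]
                      push_cast
                      ring
          have hb : b = a * l.prod := by rw [hprod]; group
          have hfin : ‖w a - w b‖ ≤ ε := by
            calc ‖w a - w b‖ = ‖w a - w (a * l.prod)‖ := by rw [← hb]
            _ ≤ l.length * (ε / (N + 1)) := tele l hlet a
            _ ≤ N * (ε / (N + 1)) := by
                  have : (l.length : ℝ) ≤ N := by exact_mod_cast hlen
                  exact mul_le_mul_of_nonneg_right this hε'.le
            _ ≤ ε := by
                  rw [← mul_div_assoc, div_le_iff₀ (by positivity : (0:ℝ) < (N:ℝ)+1)]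
                  nlinarith [hε.le, (Nat.cast_nonneg N : (0:ℝ) ≤ (N:ℝ))]
          calc ∑ c : G n, (f n (c⁻¹ * a) - f n (c⁻¹ * b)) ^ 2
              = ∑ c : G n, (f n (c * a) - f n (c * b)) ^ 2 :=
                Fintype.sum_equiv (Equiv.inv (G n)) _ _ (fun c => rfl)
          _ = ‖w a - w b‖ ^ 2 := by
                rw [euclid_norm_sq]
                exact (Finset.sum_congr rfl fun c _ => by rw [hsub]).symm
          _ ≤ ε ^ 2 := by nlinarith [norm_nonneg (w a - w b)]
        · exfalso
          have hsep := hd_sep n m hne a b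
          have hn' : (N:ℝ) + 1 ≤ (n:ℝ) := by exact_mod_cast hn
          have h0 : (0:ℝ) ≤ (m:ℝ) := Nat.cast_nonneg m
          have h1 : (0:ℝ) ≤ (wordDiam (G n) ((S n : Set (G n))) : ℝ) := Nat.cast_nonneg _
          have h2 : (0:ℝ) ≤ (wordDiam (G m) ((S m : Set (G m))) : ℝ) := Nat.cast_nonneg _
          linarith
    · intro x z hxz
      obtain ⟨n, a⟩ := x
      by_cases hn : n ≤ N
      · simp only [hξ, if_pos hn] at hxz
        have hz : z = x₀ := by
          by_contra h
          rw [if_neg h] at hxz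
          exact hxz rfl
        subst hz
        have := hdT _ (hmemT n hn a) _ (hmemT 0 (Nat.zero_le N) 1)
        calc d ⟨n, a⟩ x₀ ≤ Dlow := this
        _ ≤ max Dlow (D:ℝ) + 1 := by
              have := le_max_left Dlow (D:ℝ); linarith
      · obtain ⟨m, c⟩ := z
        simp only [hξ, if_neg hn] at hxz
        rcases eq_or_ne m n with rfl | hne
        · rw [fiberExt_same] at hxz
          have hmem : c⁻¹ * a ∈ wordBall ((S m : Set (G m))) D := (hf m).2.2.2 hxz
          have hmem' : a⁻¹ * c ∈ wordBall ((S m : Set (G m))) D := by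
            have := inv_mem_wordBall hmem
            rwa [mul_inv_rev, inv_inv] at this
          have hwd : wordDist ((S m : Set (G m))) a c ≤ D := Nat.sInf_le hmem'
          rw [hd_restrict m a c]
          calc (wordDist ((S m : Set (G m))) a c : ℝ) ≤ (D : ℝ) := by exact_mod_cast hwd
          _ ≤ max Dlow (D:ℝ) + 1 := by
                have := le_max_right Dlow (D:ℝ); linarith
        · rw [fiberExt_ne _ _ _ hne] at hxz
          exact absurd rfl hxz
  · -- property A → uniform amenability
    intro h2 ε hε
    have hεA : (0:ℝ) < ε ^ 2 / 4 := by positivity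
    obtain ⟨Sb, hSb, ξ, hpos, hnorm, hvar, hsupp⟩ := h2 (ε ^ 2 / 4) hεA 1 one_pos
    set M : ℕ := ⌈Sb⌉₊ with hM
    have hSbM : Sb ≤ (M : ℝ) := Nat.le_ceil Sb
    have hoff : ∀ n, M < n → ∀ (h : G n) (z : Σ m, G m), z.1 ≠ n → ξ ⟨n, h⟩ z = 0 := by
      intro n hn h z hz
      by_contra hne
      have hdz := hsupp _ _ hne
      obtain ⟨m, c⟩ := z
      have hnm : n ≠ m := fun e => hz (e.symm)
      have hsep := hd_sep n m hnm h c
      have hn' : (M:ℝ) + 1 ≤ (n:ℝ) := by exact_mod_cast hn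
      have h0 : (0:ℝ) ≤ (m:ℝ) := Nat.cast_nonneg m
      have h1 : (0:ℝ) ≤ (wordDiam (G n) ((S n : Set (G n))) : ℝ) := Nat.cast_nonneg _
      have h2 : (0:ℝ) ≤ (wordDiam (G m) ((S m : Set (G m))) : ℝ) := Nat.cast_nonneg _
      linarith
    have hnorm' : ∀ n, M < n → ∀ h : G n, ∑ c : G n, ξ ⟨n, h⟩ ⟨n, c⟩ ^ 2 = 1 := by
      intro n hn h
      rw [← tsum_fiber (fun z => ξ ⟨n, h⟩ z ^ 2) n (fun z hz => by
        show ξ ⟨n, h⟩ z ^ 2 = 0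
        rw [hoff n hn h z hz]
        ring)]
      exact hnorm _
    have hds : ∀ n, ∀ s ∈ S n, ∀ h : G n, d ⟨n, h⟩ ⟨n, h * s⟩ ≤ 1 := by
      intro n s hs h
      rw [hd_restrict]
      have hwb : h⁻¹ * (h * s) ∈ wordBall ((S n : Set (G n))) 1 := by
        refine ⟨[s], by simp, ?_, by simp⟩
        intro x hx
        simp only [List.mem_singleton] at hx
        subst hx
        exact Or.inl hs
      have h1 : wordDist ((S n : Set (G n))) h (h * s) ≤ 1 := Nat.sInf_le hwb
      exact_mod_cast h1
    have hvar' : ∀ n, M < n → ∀ s ∈ S n, ∀ h : G n,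
        ∑ w : G n, (ξ ⟨n, h⟩ ⟨n, w⟩ - ξ ⟨n, h * s⟩ ⟨n, w⟩) ^ 2 ≤ (ε ^ 2 / 4) ^ 2 := by
      intro n hn s hs h
      rw [← tsum_fiber (fun z => (ξ ⟨n, h⟩ z - ξ ⟨n, h * s⟩ z) ^ 2) n (fun z hz => by
        show (ξ ⟨n, h⟩ z - ξ ⟨n, h * s⟩ z) ^ 2 = 0
        rw [hoff n hn h z hz, hoff n hn (h * s) z hz]
        ring)]
      exact hvar _ _ (hds n s hs h)
    set D : ℕ := max M ((Finset.range (M+1)).sup fun j => wordDiam (G j) ((S j : Set (G j))))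
      with hD
    refine ⟨D, fun n γ =>
      if M < n then
        Real.sqrt ((Fintype.card (G n) : ℝ)⁻¹ * ∑ h : G n, ξ ⟨n, h⟩ ⟨n, h * γ⁻¹⟩ ^ 2)
      else Real.sqrt ((Fintype.card (G n) : ℝ)⁻¹), fun n => ?_⟩
    have hcpos : (0:ℝ) < (Fintype.card (G n) : ℝ) := by exact_mod_cast Fintype.card_pos
    by_cases hn : M < n
    · refine ⟨?_, ?_, ?_, ?_⟩
      · intro γ
        simp only [if_pos hn]
        exact Real.sqrt_nonneg _
      · rw [tsum_fintype]
        simp only [if_pos hn]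
        exact block_norm (fun h w => ξ ⟨n, h⟩ ⟨n, w⟩) (hnorm' n hn)
      · intro s hs
        rw [tsum_fintype]
        simp only [if_pos hn]
        calc ∑ γ : G n,
            (Real.sqrt ((Fintype.card (G n) : ℝ)⁻¹ * ∑ h : G n, ξ ⟨n, h⟩ ⟨n, h * γ⁻¹⟩ ^ 2)
            - Real.sqrt ((Fintype.card (G n) : ℝ)⁻¹
                * ∑ h : G n, ξ ⟨n, h⟩ ⟨n, h * (γ * s)⁻¹⟩ ^ 2)) ^ 2
            ≤ 2 * (ε ^ 2 / 4) :=
              block_var (fun h w => ξ ⟨n, h⟩ ⟨n, w⟩) (ε ^ 2 / 4) hεA.le s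
                (hnorm' n hn) (hvar' n hn s hs)
        _ ≤ ε ^ 2 := by nlinarith [sq_nonneg ε]
      · intro γ hγ
        rw [Function.mem_support] at hγ
        simp only [if_pos hn] at hγ
        have hx : (Fintype.card (G n) : ℝ)⁻¹ * ∑ h : G n, ξ ⟨n, h⟩ ⟨n, h * γ⁻¹⟩ ^ 2 ≠ 0 := by
          intro h0
          exact hγ (by rw [h0, Real.sqrt_zero])
        have hsumne : ∑ h : G n, ξ ⟨n, h⟩ ⟨n, h * γ⁻¹⟩ ^ 2 ≠ 0 := by
          intro h0
          exact hx (by rw [h0, mul_zero])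
        obtain ⟨h, _, hne⟩ := Finset.exists_ne_zero_of_sum_ne_zero hsumne
        have hξne : ξ ⟨n, h⟩ ⟨n, h * γ⁻¹⟩ ≠ 0 := fun e => hne (by rw [e]; ring)
        have hdle := hsupp _ _ hξne
        have hwd : wordDist ((S n : Set (G n))) h (h * γ⁻¹) ≤ M := by
          rw [hd_restrict] at hdle
          have h1 : (wordDist ((S n : Set (G n))) h (h * γ⁻¹) : ℝ) ≤ (M : ℝ) :=
            hdle.trans hSbM
          exact_mod_cast h1
        have hmem : γ⁻¹ ∈ wordBall ((S n : Set (G n))) M := by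
          have h1 := mem_wordBall_wordDist (hgen n) h (h * γ⁻¹)
          rw [show h⁻¹ * (h * γ⁻¹) = γ⁻¹ by group] at h1
          exact wordBall_mono hwd h1
        have h2 : γ ∈ wordBall ((S n : Set (G n))) M := by
          have h1 := inv_mem_wordBall hmem
          rwa [inv_inv] at h1
        exact wordBall_mono (le_max_left _ _) h2
    · refine ⟨?_, ?_, ?_, ?_⟩
      · intro γ
        simp only [if_neg hn]
        exact Real.sqrt_nonneg _
      · rw [tsum_fintype]
        simp only [if_neg hn]
        calc ∑ _γ : G n, Real.sqrt ((Fintype.card (G n) : ℝ)⁻¹) ^ 2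
            = ∑ _γ : G n, (Fintype.card (G n) : ℝ)⁻¹ :=
              Finset.sum_congr rfl fun γ _ => Real.sq_sqrt (inv_nonneg.mpr hcpos.le)
        _ = 1 := by
              rw [Finset.sum_const, Finset.card_univ, nsmul_eq_mul]
              field_simp
      · intro s hs
        rw [tsum_fintype]
        simp only [if_neg hn, sub_self]
        simp only [ne_eq, OfNat.ofNat_ne_zero, not_false_eq_true, zero_pow,
          Finset.sum_const, smul_zero]
        positivity
      · intro γ _
        push_neg at hn
        have hwdiam : wordDist ((S n : Set (G n))) 1 γ ≤ wordDiam (G n) ((S n : Set (G n))) :=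
          Finset.le_sup (f := fun p : G n × G n => wordDist ((S n : Set (G n))) p.1 p.2)
            (Finset.mem_univ ((1 : G n), γ))
        have hmem : γ ∈ wordBall ((S n : Set (G n))) (wordDist ((S n : Set (G n))) 1 γ) := by
          have h1 := mem_wordBall_wordDist (hgen n) (1 : G n) γ
          rwa [inv_one, one_mul] at h1
        have hdle : wordDiam (G n) ((S n : Set (G n)))
            ≤ (Finset.range (M+1)).sup fun j => wordDiam (G j) ((S j : Set (G j))) :=
          Finset.le_sup (f := fun j => wordDiam (G j) ((S j : Set (G j))))
            (Finset.mem_range.mpr (Nat.lt_succ_of_le hn))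
        exact wordBall_mono ((hwdiam.trans hdle).trans (le_max_right _ _)) hmem
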